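/- Let 0 < a < 1 and s > 0. Then ∫_0^∞ e^{−st} · (e^{−t}/π) · [∫_0^∞ (y^{−a} e^{−yt} / (1+y)) · (π cos(πa) − log(y) sin(πa)) dy] dt = log(1+s) / (s (1+s)^a). -/

import Mathlib

open Real MeasureTheory
open Set


lemma intOn_rpow_exp {p t : ℝ} (hp : -1 < p) (ht : 0 < t) :
    IntegrableOn (fun y : ℝ => y ^ p * Real.exp (-(t*y))) (Ioi 0) := by
  have := integrableOn_rpow_mul_exp_neg_mul_rpow hp one_pos ht
  refine this.congr_fun (fun y hy => by dsimp only; rw [Real.rpow_one, neg_mul]) measurableSet_Ioi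

lemma int_exp_Ioi {r : ℝ} (hr : 0 < r) :
    ∫ t in Ioi (0:ℝ), Real.exp (-(r*t)) = 1/r := by
  have := Real.integral_rpow_mul_exp_neg_mul_Ioi (a := 1) one_pos hr
  simpa [Real.rpow_one] using this

lemma int_rpow_exp {p r : ℝ} (hp : 0 < p) (hr : 0 < r) :
    ∫ y in Ioi (0:ℝ), y ^ (p-1) * Real.exp (-(r*y)) = r^(-p) * Real.Gamma p := by
  rw [Real.integral_rpow_mul_exp_neg_mul_Ioi hp hr, one_div, Real.inv_rpow hr.le,
    ← Real.rpow_neg hr.le]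

noncomputable def core (p c : ℝ) : ℝ → ℝ → ℝ :=
  fun t y => Real.exp (-(c*t)) * (y ^ (p-1) * Real.exp (-(t*y)))

lemma core_meas (p c : ℝ) : Measurable (Function.uncurry (core p c)) := by
  unfold core Function.uncurry
  fun_prop

lemma core_inner_int {p c : ℝ} (hp0 : -1 < p - 1) {t : ℝ} (ht : 0 < t) :
    Integrable (core p c t) (volume.restrict (Ioi 0)) :=
  (intOn_rpow_exp hp0 ht).const_mul _

lemma core_inner_norm {p c : ℝ} (hp0 : 0 < p) {t : ℝ} (ht : 0 < t) :
    ∫ y in Ioi (0:ℝ), ‖core p c t y‖ = Real.exp (-(c*t)) * (t^(-p) * Real.Gamma p) := by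
  rw [← int_rpow_exp hp0 ht, ← integral_const_mul]
  refine setIntegral_congr_fun measurableSet_Ioi (fun y hy => ?_)
  have hy' : (0:ℝ) < y := hy
  rw [Real.norm_eq_abs, abs_of_nonneg]
  · rfl
  · exact mul_nonneg (Real.exp_pos _).le
      (mul_nonneg (Real.rpow_nonneg hy'.le _) (Real.exp_pos _).le)

lemma core_int {p c : ℝ} (hp0 : 0 < p) (hp1 : p < 1) (hc : 0 < c) :
    Integrable (Function.uncurry (core p c))
      ((volume.restrict (Ioi 0)).prod (volume.restrict (Ioi 0))) := by
  refine (integrable_prod_iff (core_meas p c).aestronglyMeasurable).2 ⟨?_, ?_⟩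
  · filter_upwards [self_mem_ae_restrict measurableSet_Ioi] with t ht
    exact core_inner_int (by linarith) ht
  · have h2 : IntegrableOn (fun t : ℝ => Real.exp (-(c*t)) * (t^(-p) * Real.Gamma p))
        (Ioi 0) := by
      have h : IntegrableOn (fun t : ℝ => t^(-p) * Real.exp (-(c*t)) * Real.Gamma p)
          (Ioi 0) := (intOn_rpow_exp (show (-1:ℝ) < -p by linarith) hc).mul_const _
      exact h.congr_fun (fun t ht => by ring) measurableSet_Ioi
    exact h2.congr_fun (fun t ht => (core_inner_norm hp0 ht).symm) measurableSet_Ioi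

lemma core_value {p c : ℝ} (hp0 : 0 < p) (hp1 : p < 1) (hc : 0 < c) :
    ∫ y in Ioi (0:ℝ), y ^ (p-1) / (c + y)
      = Real.Gamma p * Real.Gamma (1-p) * c ^ (p-1) := by
  have swap := integral_integral_swap (core_int hp0 hp1 hc)
  have lhs_eq : ∫ y in Ioi (0:ℝ), (∫ t in Ioi (0:ℝ), core p c t y)
      = ∫ y in Ioi (0:ℝ), y ^ (p-1) / (c + y) := by
    refine setIntegral_congr_fun measurableSet_Ioi (fun y hy => ?_)
    have hy' : (0:ℝ) < y := hy
    have : ∀ t : ℝ, core p c t y = y ^ (p-1) * Real.exp (-((c+y)*t)) := by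
      intro t; unfold core
      rw [show -((c+y)*t) = -(c*t) + -(t*y) by ring, Real.exp_add]; ring
    simp_rw [this]
    rw [integral_const_mul, int_exp_Ioi (by linarith)]
    ring
  have rhs_eq : ∫ t in Ioi (0:ℝ), (∫ y in Ioi (0:ℝ), core p c t y)
      = Real.Gamma p * Real.Gamma (1-p) * c ^ (p-1) := by
    have h1 : ∀ t ∈ Ioi (0:ℝ), (∫ y in Ioi (0:ℝ), core p c t y)
        = Real.Gamma p * (t ^ (-p) * Real.exp (-(c*t))) := by
      intro t ht
      unfold core
      rw [integral_const_mul, int_rpow_exp hp0 ht]; ring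
    have h2 := int_rpow_exp (show (0:ℝ) < 1 - p by linarith) hc
    rw [show (1:ℝ)-p-1 = -p by ring, show -((1:ℝ)-p) = p-1 by ring] at h2
    rw [setIntegral_congr_fun measurableSet_Ioi h1, integral_const_mul, h2]
    ring
  rw [← lhs_eq, ← swap, rhs_eq]

lemma key_A {a c : ℝ} (ha0 : 0 < a) (ha1 : a < 1) (hc : 0 < c) :
    ∫ y in Ioi (0:ℝ), y ^ (-a) / (c + y) = π * c ^ (-a) / Real.sin (π*a) := by
  have := core_value (p := 1-a) (by linarith) (by linarith) hc
  rw [show (1:ℝ)-a-1 = -a by ring, show (1:ℝ)-(1-a) = a by ring] at this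
  rw [mul_comm (Real.Gamma (1-a))] at this
  rw [this, Real.Gamma_mul_Gamma_one_sub]
  ring

lemma log_bound_ge {y ε : ℝ} (hy : 1 ≤ y) (hε : 0 < ε) : |Real.log y| ≤ y ^ ε / ε := by
  rw [abs_of_nonneg (Real.log_nonneg hy)]
  have h1 : Real.log (y ^ ε) ≤ y ^ ε - 1 :=
    Real.log_le_sub_one_of_pos (Real.rpow_pos_of_pos (by linarith) _)
  rw [Real.log_rpow (by linarith)] at h1
  rw [le_div_iff₀ hε]; nlinarith
lemma log_bound_le {y ε : ℝ} (hy0 : 0 < y) (hy : y ≤ 1) (hε : 0 < ε) :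
    |Real.log y| ≤ y ^ (-ε) / ε := by
  have h := log_bound_ge (y := 1/y) (by rw [le_div_iff₀ hy0]; linarith) hε
  rw [one_div, Real.log_inv, abs_neg, Real.inv_rpow hy0.le, ← Real.rpow_neg hy0.le] at h
  exact h

lemma intOn_single {q c : ℝ} (hq0 : -1 < q) (hq1 : q < 0) (hc : 0 < c) :
    IntegrableOn (fun y : ℝ => y ^ q * (1 + |Real.log y|) / (c + y)) (Ioi 0) := by
  have hmeas : Measurable (fun y : ℝ => y ^ q * (1 + |Real.log y|) / (c + y)) := by
    have h1 : Measurable (fun y : ℝ => |Real.log y|) := Real.measurable_log.abs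
    fun_prop
  have hIoc : IntegrableOn (fun y : ℝ => y ^ q * (1 + |Real.log y|) / (c + y)) (Ioc 0 1) := by
    set ε := (1+q)/2 with hε
    have hε0 : 0 < ε := by rw [hε]; linarith
    have hdom : IntegrableOn (fun y : ℝ => c⁻¹ * (y ^ q + ε⁻¹ * y ^ (q - ε))) (Ioc 0 1) := by
      apply Integrable.const_mul
      have i1 := (intervalIntegrable_iff_integrableOn_Ioc_of_le zero_le_one).1
        (intervalIntegral.intervalIntegrable_rpow' hq0 : IntervalIntegrable _ volume 0 1)
      have i2 := (intervalIntegrable_iff_integrableOn_Ioc_of_le zero_le_one).1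
        (intervalIntegral.intervalIntegrable_rpow'
          (show (-1:ℝ) < q - ε by rw [hε]; linarith) : IntervalIntegrable _ volume 0 1)
      exact i1.add (i2.const_mul _)
    refine hdom.mono' hmeas.aestronglyMeasurable ?_
    filter_upwards [self_mem_ae_restrict measurableSet_Ioc] with y hy
    obtain ⟨hy0, hy1⟩ := hy
    have h1 : |Real.log y| ≤ ε⁻¹ * y ^ (-ε) := by
      have := log_bound_le hy0 hy1 hε0
      rwa [div_eq_inv_mul] at this
    have hcy : c ≤ c + y := by linarith
    rw [Real.norm_eq_abs, abs_of_nonneg (by positivity)]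
    calc y ^ q * (1 + |Real.log y|) / (c + y)
        ≤ y ^ q * (1 + ε⁻¹ * y ^ (-ε)) / c := by
          gcongr
      _ = c⁻¹ * (y ^ q + ε⁻¹ * (y ^ q * y ^ (-ε))) := by ring
      _ = c⁻¹ * (y ^ q + ε⁻¹ * y ^ (q - ε)) := by
          rw [← Real.rpow_add hy0]; ring_nf
  have hIoi : IntegrableOn (fun y : ℝ => y ^ q * (1 + |Real.log y|) / (c + y)) (Ioi 1) := by
    set ε := -q/2 with hε
    have hε0 : 0 < ε := by rw [hε]; linarith
    have hdom : IntegrableOn (fun y : ℝ => y ^ (q-1) + ε⁻¹ * y ^ (q + ε - 1)) (Ioi 1) := by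
      exact (integrableOn_Ioi_rpow_of_lt (by linarith) one_pos).add
        ((integrableOn_Ioi_rpow_of_lt (by rw [hε]; linarith) one_pos).const_mul _)
    refine hdom.mono' hmeas.aestronglyMeasurable ?_
    filter_upwards [self_mem_ae_restrict measurableSet_Ioi] with y hy
    have hy1 : (1:ℝ) < y := hy
    have hy0 : (0:ℝ) < y := by linarith
    have h1 : |Real.log y| ≤ ε⁻¹ * y ^ ε := by
      have := log_bound_ge hy1.le hε0
      rwa [div_eq_inv_mul] at this
    have hcy : y ≤ c + y := by linarith
    rw [Real.norm_eq_abs, abs_of_nonneg (by positivity)]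
    calc y ^ q * (1 + |Real.log y|) / (c + y)
        ≤ y ^ q * (1 + ε⁻¹ * y ^ ε) / y := by
          gcongr
      _ = y ^ q * y⁻¹ + ε⁻¹ * (y ^ q * y ^ ε * y⁻¹) := by ring
      _ = y ^ (q-1) + ε⁻¹ * y ^ (q + ε - 1) := by
          rw [← Real.rpow_neg_one y, ← Real.rpow_add hy0, ← Real.rpow_add hy0,
            ← Real.rpow_add hy0]; ring_nf
  have : Ioc (0:ℝ) 1 ∪ Ioi 1 = Ioi 0 := Ioc_union_Ioi_eq_Ioi zero_le_one
  rw [← this]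
  exact hIoc.union hIoi

lemma intOn_A {q c : ℝ} (hq0 : -1 < q) (hq1 : q < 0) (hc : 0 < c) :
    IntegrableOn (fun y : ℝ => y ^ q / (c + y)) (Ioi 0) := by
  have h1 : Measurable (fun y : ℝ => y ^ q / (c + y)) := by fun_prop
  refine (intOn_single hq0 hq1 hc).mono' h1.aestronglyMeasurable ?_
  filter_upwards [self_mem_ae_restrict measurableSet_Ioi] with y hy
  have hy0 : (0:ℝ) < y := hy
  rw [Real.norm_eq_abs, abs_of_nonneg (by positivity)]
  gcongr
  nlinarith [abs_nonneg (Real.log y), Real.rpow_nonneg hy0.le q]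

lemma intOn_B {q c : ℝ} (hq0 : -1 < q) (hq1 : q < 0) (hc : 0 < c) :
    IntegrableOn (fun y : ℝ => y ^ q * Real.log y / (c + y)) (Ioi 0) := by
  have h1 : Measurable (fun y : ℝ => y ^ q * Real.log y / (c + y)) := by
    have := Real.measurable_log
    fun_prop
  refine (intOn_single hq0 hq1 hc).mono' h1.aestronglyMeasurable ?_
  filter_upwards [self_mem_ae_restrict measurableSet_Ioi] with y hy
  have hy0 : (0:ℝ) < y := hy
  rw [Real.norm_eq_abs, abs_div, abs_of_nonneg (by positivity : (0:ℝ) ≤ c + y), abs_mul,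
    abs_of_nonneg (Real.rpow_nonneg hy0.le _)]
  gcongr
  nlinarith [abs_nonneg (Real.log y), Real.rpow_nonneg hy0.le q]

lemma sin_pi_mul_ne {a : ℝ} (ha0 : 0 < a) (ha1 : a < 1) : Real.sin (π * a) ≠ 0 := by
  have : 0 < Real.sin (π * a) := Real.sin_pos_of_pos_of_lt_pi (by positivity)
    (by nlinarith [Real.pi_pos])
  exact this.ne'

lemma key_B {a c : ℝ} (ha0 : 0 < a) (ha1 : a < 1) (hc : 0 < c) :
    ∫ y in Ioi (0:ℝ), y ^ (-a) * Real.log y / (c + y)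
      = π * c ^ (-a) * (Real.log c * Real.sin (π*a) + π * Real.cos (π*a))
        / Real.sin (π*a) ^ 2 := by
  set δ := min a (1-a) / 2 with hδ
  have hδ0 : 0 < δ := by
    rw [hδ]; have := lt_min ha0 (by linarith : (0:ℝ) < 1-a); positivity
  have hδa : δ < a := by
    rw [hδ]; have := min_le_left a (1-a); linarith
  have hδ1 : a + δ < 1 := by
    rw [hδ]; have := min_le_right a (1-a); linarith
  set F : ℝ → ℝ → ℝ := fun α y => y ^ (-α) / (c + y) with hF
  set F' : ℝ → ℝ → ℝ := fun α y => -(y ^ (-α) * Real.log y / (c + y)) with hF'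
  set bound : ℝ → ℝ := fun y =>
    (y ^ (-(a+δ)) * (1 + |Real.log y|) / (c + y)) +
    (y ^ (-(a-δ)) * (1 + |Real.log y|) / (c + y)) with hbd
  have hlog := Real.measurable_log
  have main := hasDerivAt_integral_of_dominated_loc_of_deriv_le (F := F) (F' := F')
    (μ := volume.restrict (Ioi 0)) (x₀ := a) (bound := bound) (Metric.ball_mem_nhds a hδ0)
    (Filter.Eventually.of_forall (fun x => by
      rw [hF]; exact (by fun_prop : Measurable fun y : ℝ => y ^ (-x) / (c + y)).aestronglyMeasurable))
    (intOn_A (by linarith) (by linarith) hc)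
    ((by fun_prop : Measurable fun y : ℝ => -(y ^ (-a) * Real.log y / (c + y))).aestronglyMeasurable)
    ?_ ?_ ?_
  · -- conclude
    have hderiv := main.2
    -- the model function
    have hFg : ∀ α ∈ Ioo (0:ℝ) 1,
        (∫ y in Ioi (0:ℝ), F α y) = π * c ^ (-α) / Real.sin (π * α) := by
      intro α hα
      exact key_A hα.1 hα.2 hc
    have hsin := sin_pi_mul_ne ha0 ha1
    have hg : HasDerivAt (fun α : ℝ => π * c ^ (-α) / Real.sin (π * α))
        ((π * (c ^ (-a) * Real.log c * (-1)) * Real.sin (π * a)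
          - π * c ^ (-a) * (Real.cos (π * a) * π)) / Real.sin (π * a) ^ 2) a := by
      have h1 : HasDerivAt (fun α : ℝ => c ^ (-α)) (c ^ (-a) * Real.log c * (-1)) a := by
        have h0 := (hasDerivAt_const a c).rpow (hasDerivAt_neg a) (by simpa using hc)
        convert h0 using 1
        ring
      have h2 : HasDerivAt (fun α : ℝ => Real.sin (π * α)) (Real.cos (π * a) * π) a := by
        have h0 : HasDerivAt (fun α : ℝ => π * α) π a := by
          simpa using (hasDerivAt_id a).const_mul π
        exact h0.sin
      exact (h1.const_mul π).div h2 hsin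
    have heq : (fun α : ℝ => ∫ y in Ioi (0:ℝ), F α y)
        =ᶠ[nhds a] (fun α : ℝ => π * c ^ (-α) / Real.sin (π * α)) := by
      filter_upwards [Ioo_mem_nhds ha0 ha1] with α hα
      exact hFg α hα
    have hderiv2 : HasDerivAt (fun α : ℝ => ∫ y in Ioi (0:ℝ), F α y)
        ((π * (c ^ (-a) * Real.log c * (-1)) * Real.sin (π * a)
          - π * c ^ (-a) * (Real.cos (π * a) * π)) / Real.sin (π * a) ^ 2) a :=
      hg.congr_of_eventuallyEq heq
    have huniq := hderiv.unique hderiv2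
    have hFi : (∫ y in Ioi (0:ℝ), F' a y)
        = -∫ y in Ioi (0:ℝ), y ^ (-a) * Real.log y / (c + y) := by
      rw [hF', ← integral_neg]
    rw [hFi] at huniq
    have := neg_eq_iff_eq_neg.mp huniq
    rw [this]
    field_simp
    ring
  · -- bound
    filter_upwards [self_mem_ae_restrict measurableSet_Ioi] with y hy
    intro x hx
    have hy0 : (0:ℝ) < y := hy
    rw [mem_ball_iff_norm, Real.norm_eq_abs, abs_sub_lt_iff] at hx
    have hx1 : x < a + δ := by linarith [hx.1]
    have hx2 : a - δ < x := by linarith [hx.2]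
    have hb : y ^ (-x) ≤ y ^ (-(a+δ)) + y ^ (-(a-δ)) := by
      rcases le_total y 1 with h | h
      · have : y ^ (-x) ≤ y ^ (-(a+δ)) :=
          Real.rpow_le_rpow_of_exponent_ge hy0 h (by linarith)
        have h2 : (0:ℝ) ≤ y ^ (-(a-δ)) := Real.rpow_nonneg hy0.le _
        linarith
      · have : y ^ (-x) ≤ y ^ (-(a-δ)) :=
          Real.rpow_le_rpow_of_exponent_le h (by linarith)
        have h2 : (0:ℝ) ≤ y ^ (-(a+δ)) := Real.rpow_nonneg hy0.le _
        linarith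
    have hcy : (0:ℝ) < c + y := by linarith
    rw [hF', hbd]
    rw [Real.norm_eq_abs, abs_neg, abs_div, abs_of_nonneg hcy.le, abs_mul,
      abs_of_nonneg (Real.rpow_nonneg hy0.le _)]
    show y ^ (-x) * |Real.log y| / (c + y)
      ≤ y ^ (-(a+δ)) * (1 + |Real.log y|) / (c + y) + y ^ (-(a-δ)) * (1 + |Real.log y|) / (c + y)
    rw [← add_div, div_le_div_iff_of_pos_right hcy]
    calc y ^ (-x) * |Real.log y| ≤ (y ^ (-(a+δ)) + y ^ (-(a-δ))) * (1 + |Real.log y|) := by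
          apply mul_le_mul hb (by linarith) (abs_nonneg _)
          positivity
      _ = y ^ (-(a+δ)) * (1 + |Real.log y|) + y ^ (-(a-δ)) * (1 + |Real.log y|) := by ring
  · -- bound integrable
    exact (intOn_single (by linarith) (by linarith) hc).add
      (intOn_single (by linarith) (by linarith) hc)
  · -- differentiability
    filter_upwards [self_mem_ae_restrict measurableSet_Ioi] with y hy
    intro x hx
    have hy0 : (0:ℝ) < y := hy
    have h1 : HasDerivAt (fun α : ℝ => y ^ (-α)) (y ^ (-x) * Real.log y * (-1)) x := by
      have h0 := (hasDerivAt_const x y).rpow (hasDerivAt_neg x) (by simpa using hy0)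
      convert h0 using 1
      ring
    have h2 := h1.div_const (c + y)
    have hF'x : F' x y = y ^ (-x) * Real.log y * (-1) / (c + y) := by rw [hF']; ring
    rw [hF'x]; exact h2

lemma log_bound {y ε : ℝ} (hy : 0 < y) (hε : 0 < ε) :
    |Real.log y| ≤ ε⁻¹ * (y ^ ε + y ^ (-ε)) := by
  rcases le_total y 1 with h | h
  · have h1 := log_bound_le hy h hε
    have h2 : (0:ℝ) ≤ y ^ ε := Real.rpow_nonneg hy.le _
    rw [div_eq_inv_mul] at h1
    nlinarith [inv_pos.mpr hε]
  · have h1 := log_bound_ge h hε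
    have h2 : (0:ℝ) ≤ y ^ (-ε) := Real.rpow_nonneg hy.le _
    rw [div_eq_inv_mul] at h1
    nlinarith [inv_pos.mpr hε]

set_option maxHeartbeats 2000000 in
theorem laplace_transform_inverse_gamma_density (a s : ℝ)
    (ha0 : 0 < a) (ha1 : a < 1) (hs : 0 < s) :
    ∫ t in Set.Ioi (0 : ℝ),
      Real.exp (-s * t) * (Real.exp (-t) / π) *
        (∫ y in Set.Ioi (0 : ℝ),
          (y ^ (-a) * Real.exp (-y * t) / (1 + y)) *
            (π * Real.cos (π * a) - Real.log y * Real.sin (π * a)))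
      = Real.log (1 + s) / (s * (1 + s) ^ a) := by
  have hπ := Real.pi_pos
  have hπ1 := Real.pi_gt_three
  set K : ℝ → ℝ := fun y => π * Real.cos (π * a) - Real.log y * Real.sin (π * a) with hK
  set G : ℝ → ℝ → ℝ := fun t y =>
    Real.exp (-s * t) * (Real.exp (-t) / π) *
      ((y ^ (-a) * Real.exp (-y * t) / (1 + y)) * K y) with hG
  set ε := min a (1-a) / 2 with hε
  have hε0 : 0 < ε := by
    rw [hε]; have := lt_min ha0 (by linarith : (0:ℝ) < 1-a); positivity
  have hεa : ε < a := by rw [hε]; have := min_le_left a (1-a); linarith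
  have hε1 : ε < 1 - a := by rw [hε]; have := min_le_right a (1-a); linarith
  have hc0 : (0:ℝ) < 1 + s := by linarith
  -- measurability of G
  have hGmeas : Measurable (Function.uncurry G) := by
    have := Real.measurable_log
    rw [hG, hK]; unfold Function.uncurry; fun_prop
  -- product integrability of G
  have hInt : Integrable (Function.uncurry G)
      ((volume.restrict (Ioi 0)).prod (volume.restrict (Ioi 0))) := by
    set D : ℝ × ℝ → ℝ := fun z => core (1-a) (1+s) z.1 z.2 +
      ε⁻¹ * (core (1-a+ε) (1+s) z.1 z.2 + core (1-a-ε) (1+s) z.1 z.2) with hD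
    have hDint : Integrable D ((volume.restrict (Ioi 0)).prod (volume.restrict (Ioi 0))) := by
      refine Integrable.add ?_ (Integrable.const_mul (Integrable.add ?_ ?_) _)
      · exact core_int (by linarith) (by linarith) hc0
      · exact core_int (by linarith) (by linarith) hc0
      · exact core_int (by linarith) (by linarith) hc0
    refine hDint.mono' hGmeas.aestronglyMeasurable ?_
    have hprod : (volume.restrict (Ioi (0:ℝ))).prod (volume.restrict (Ioi (0:ℝ)))
        = (volume.prod volume).restrict ((Ioi 0) ×ˢ (Ioi 0)) :=
      Measure.prod_restrict _ _
    rw [hprod]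
    filter_upwards [self_mem_ae_restrict (measurableSet_Ioi.prod measurableSet_Ioi)] with z hz
    obtain ⟨ht, hy⟩ := hz
    set t := z.1; set y := z.2
    have ht0 : (0:ℝ) < t := ht
    have hy0 : (0:ℝ) < y := hy
    have h1y : (0:ℝ) < 1 + y := by linarith
    -- |K y| ≤ π * (1 + |log y|)
    have hKb : |K y| ≤ π * (1 + |Real.log y|) := by
      rw [hK]
      calc |π * Real.cos (π * a) - Real.log y * Real.sin (π * a)|
          ≤ |π * Real.cos (π * a)| + |Real.log y * Real.sin (π * a)| := abs_sub _ _
        _ ≤ π * 1 + |Real.log y| * 1 := by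
            rw [abs_mul, abs_mul, abs_of_pos hπ]
            gcongr
            · exact Real.abs_cos_le_one _
            · exact Real.abs_sin_le_one _
        _ ≤ π * (1 + |Real.log y|) := by nlinarith [abs_nonneg (Real.log y)]
    set P : ℝ := Real.exp (-s*t) * Real.exp (-t) * (y ^ (-a) * Real.exp (-y*t)) with hP
    have hP0 : 0 ≤ P := by positivity
    have habs : ‖G t y‖ ≤ P * (1 + |Real.log y|) := by
      rw [hG, Real.norm_eq_abs]
      simp only []
      rw [abs_mul, abs_mul, abs_mul,
        abs_of_nonneg (by positivity : (0:ℝ) ≤ Real.exp (-s*t)),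
        abs_of_nonneg (by positivity : (0:ℝ) ≤ Real.exp (-t) / π),
        abs_of_nonneg (by positivity : (0:ℝ) ≤ y ^ (-a) * Real.exp (-y*t) / (1+y))]
      calc Real.exp (-s*t) * (Real.exp (-t)/π) * (y ^ (-a) * Real.exp (-y*t) / (1+y) * |K y|)
          ≤ Real.exp (-s*t) * (Real.exp (-t)/π) *
              (y ^ (-a) * Real.exp (-y*t) / 1 * (π * (1 + |Real.log y|))) := by
            gcongr
            · linarith
      _ = P * (1 + |Real.log y|) := by rw [hP]; field_simp
    refine habs.trans ?_
    have hlb := log_bound hy0 hε0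
    have hco : ∀ q : ℝ, core (1-a+q) (1+s) t y = P * y ^ q := by
      intro q
      unfold core
      rw [hP, show (1:ℝ)-a+q-1 = -a + q by ring, Real.rpow_add hy0,
        show -((1+s)*t) = -s*t + -t by ring, Real.exp_add,
        show -(t*y) = -y*t by ring]
      ring
    have hc1 : core (1-a) (1+s) t y = P := by
      have := hco 0
      rw [show (1:ℝ)-a+0 = 1-a by ring, Real.rpow_zero, mul_one] at this
      exact this
    have hc2 := hco ε
    have hc3 : core (1-a-ε) (1+s) t y = P * y ^ (-ε) := by
      have := hco (-ε)
      rw [show (1:ℝ)-a+-ε = 1-a-ε by ring] at this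
      exact this
    show P * (1 + |Real.log y|) ≤ D (t, y)
    rw [hD]
    simp only []
    rw [hc1, hc2, hc3]
    have : P * |Real.log y| ≤ P * (ε⁻¹ * (y ^ ε + y ^ (-ε))) := by
      exact mul_le_mul_of_nonneg_left hlb hP0
    nlinarith [this]
  -- Fubini
  have hswap := integral_integral_swap hInt
  have hLHS : ∫ t in Ioi (0:ℝ),
      Real.exp (-s * t) * (Real.exp (-t) / π) *
        (∫ y in Ioi (0:ℝ), (y ^ (-a) * Real.exp (-y * t) / (1 + y)) * K y)
      = ∫ t in Ioi (0:ℝ), ∫ y in Ioi (0:ℝ), G t y := by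
    refine setIntegral_congr_fun measurableSet_Ioi (fun t ht => ?_)
    rw [hG]
    exact (integral_const_mul _ _).symm
  rw [hLHS, hswap]
  -- inner t integral
  have hInner : ∀ y ∈ Ioi (0:ℝ), (∫ t in Ioi (0:ℝ), G t y)
      = (1/π * (y ^ (-a) / (1+y) * K y)) * (1/(1+s+y)) := by
    intro y hy
    have hy0 : (0:ℝ) < y := hy
    have hGy : ∀ t : ℝ, G t y
        = (1/π * (y ^ (-a) / (1+y) * K y)) * Real.exp (-((1+s+y)*t)) := by
      intro t
      rw [hG]
      simp only []
      rw [show -((1+s+y)*t) = -s*t + (-t + -y*t) by ring, Real.exp_add, Real.exp_add]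
      ring
    simp_rw [hGy]
    rw [integral_const_mul, int_exp_Ioi (by linarith)]
  rw [setIntegral_congr_fun measurableSet_Ioi hInner]
  -- partial fractions
  have hsin := sin_pi_mul_ne ha0 ha1
  have hsplit : ∀ y ∈ Ioi (0:ℝ),
      (1/π * (y ^ (-a) / (1+y) * K y)) * (1/(1+s+y))
      = (Real.cos (π*a)/s) * (y ^ (-a) / (1+y))
        - (Real.sin (π*a)/(π*s)) * (y ^ (-a) * Real.log y / (1+y))
        - ((Real.cos (π*a)/s) * (y ^ (-a) / (1+s+y))
        - (Real.sin (π*a)/(π*s)) * (y ^ (-a) * Real.log y / (1+s+y))) := by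
    intro y hy
    have hy0 : (0:ℝ) < y := hy
    have h1y : (1:ℝ) + y ≠ 0 := by positivity
    have h1sy : (1:ℝ) + s + y ≠ 0 := by positivity
    rw [hK]
    field_simp
    ring
  rw [setIntegral_congr_fun measurableSet_Ioi hsplit]
  -- integrate term by term
  have iA1 : IntegrableOn (fun y : ℝ => y ^ (-a) / (1+y)) (Ioi 0) := by
    have := intOn_A (q := -a) (c := 1) (by linarith) (by linarith) one_pos
    exact this.congr_fun (fun y hy => rfl) measurableSet_Ioi
  have iB1 : IntegrableOn (fun y : ℝ => y ^ (-a) * Real.log y / (1+y)) (Ioi 0) := by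
    have := intOn_B (q := -a) (c := 1) (by linarith) (by linarith) one_pos
    exact this.congr_fun (fun y hy => rfl) measurableSet_Ioi
  have iA2 : IntegrableOn (fun y : ℝ => y ^ (-a) / (1+s+y)) (Ioi 0) := by
    have := intOn_A (q := -a) (c := 1+s) (by linarith) (by linarith) hc0
    exact this.congr_fun (fun y hy => rfl) measurableSet_Ioi
  have iB2 : IntegrableOn (fun y : ℝ => y ^ (-a) * Real.log y / (1+s+y)) (Ioi 0) := by
    have := intOn_B (q := -a) (c := 1+s) (by linarith) (by linarith) hc0
    exact this.congr_fun (fun y hy => rfl) measurableSet_Ioi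
  have I1 : Integrable (fun y : ℝ => Real.cos (π*a)/s * (y ^ (-a) / (1+y))
      - Real.sin (π*a)/(π*s) * (y ^ (-a) * Real.log y / (1+y)))
      (volume.restrict (Ioi 0)) := (iA1.const_mul _).sub (iB1.const_mul _)
  have I2 : Integrable (fun y : ℝ => Real.cos (π*a)/s * (y ^ (-a) / (1+s+y))
      - Real.sin (π*a)/(π*s) * (y ^ (-a) * Real.log y / (1+s+y)))
      (volume.restrict (Ioi 0)) := (iA2.const_mul _).sub (iB2.const_mul _)
  rw [integral_sub I1 I2,
    integral_sub ((iA1.const_mul _ : Integrable (fun y : ℝ => Real.cos (π*a)/s * (y ^ (-a) / (1+y))) _))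
      ((iB1.const_mul _ : Integrable (fun y : ℝ => Real.sin (π*a)/(π*s) * (y ^ (-a) * Real.log y / (1+y))) _)),
    integral_sub ((iA2.const_mul _ : Integrable (fun y : ℝ => Real.cos (π*a)/s * (y ^ (-a) / (1+s+y))) _))
      ((iB2.const_mul _ : Integrable (fun y : ℝ => Real.sin (π*a)/(π*s) * (y ^ (-a) * Real.log y / (1+s+y))) _)),
    integral_const_mul, integral_const_mul, integral_const_mul, integral_const_mul]
  have vA1 : ∫ y in Ioi (0:ℝ), y ^ (-a) / (1+y) = π * 1 / Real.sin (π*a) := by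
    have := key_A ha0 ha1 one_pos
    rw [Real.one_rpow] at this
    exact this
  have vB1 : ∫ y in Ioi (0:ℝ), y ^ (-a) * Real.log y / (1+y)
      = π * 1 * (0 * Real.sin (π*a) + π * Real.cos (π*a)) / Real.sin (π*a) ^ 2 := by
    have := key_B ha0 ha1 one_pos
    rw [Real.one_rpow, Real.log_one] at this
    exact this
  have vA2 : ∫ y in Ioi (0:ℝ), y ^ (-a) / (1+s+y)
      = π * (1+s) ^ (-a) / Real.sin (π*a) := key_A ha0 ha1 hc0
  have vB2 : ∫ y in Ioi (0:ℝ), y ^ (-a) * Real.log y / (1+s+y)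
      = π * (1+s) ^ (-a) * (Real.log (1+s) * Real.sin (π*a) + π * Real.cos (π*a))
        / Real.sin (π*a) ^ 2 := key_B ha0 ha1 hc0
  rw [vA1, vB1, vA2, vB2]
  rw [Real.rpow_neg hc0.le]
  have hrs : ((1:ℝ)+s) ^ a ≠ 0 := by
    have := Real.rpow_pos_of_pos hc0 a
    positivity
  field_simp
  ring
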